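/- (Lemma 1) Isomorphic global types have equal trace sets: if G1 ≅ G2 then Tr(G1) = Tr(G2). -/

import Mathlib

abbrev Label := ℕ

inductive VTy
  | bool | nat
deriving DecidableEq

inductive Msg
  | val (U : VTy)
  | lab (l : Label)
deriving DecidableEq

structure Pref where
  sender : ℕ
  receiver : ℕ
  msg : Msg
deriving DecidableEq

def Pref.pid (g : Pref) : Set ℕ := {g.sender, g.receiver}

inductive Global
  | comm (g : Pref) (G : Global)
  | branch (p q : ℕ) (bs : List (Label × Global))
  | var (t : ℕ)
  | mu (t : ℕ) (G : Global)
  | gend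

namespace Global

def subst (t : ℕ) (H : Global) : Global → Global
  | comm g G => comm g (subst t H G)
  | branch p q bs => branch p q (bs.attach.map fun ⟨⟨l, G⟩, h⟩ => (l, subst t H G))
  | var s => if s = t then H else var s
  | mu s G => if s = t then mu s G else mu s (subst t H G)
  | gend => gend
decreasing_by
  all_goals simp_wf
  all_goals try (have := List.sizeOf_lt_of_mem h; simp only [Prod.mk.sizeOf_spec] at this)
  all_goals try simp only [Global.branch.sizeOf_spec, Global.mu.sizeOf_spec, Global.comm.sizeOf_spec] at *
  all_goals omega

end Global

inductive GStep : Global → Pref → Global → Prop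
  | inter (g : Pref) (G : Global) :
      GStep (.comm g G) g G
  | selbra {p q : ℕ} {bs : List (Label × Global)} {l : Label} {Gk : Global} :
      (l, Gk) ∈ bs →
      GStep (.branch p q bs) ⟨p, q, .lab l⟩ Gk
  | iperm {G G' : Global} {g g' : Pref} :
      GStep G g' G' → g.pid ∩ g'.pid = ∅ →
      GStep (.comm g G) g' (.comm g G')
  | sbperm {p q : ℕ} {bs bs' : List (Label × Global)} {g' : Pref} :
      bs.length = bs'.length →
      (∀ bb ∈ bs.zip bs', bb.1.1 = bb.2.1) →
      (∀ bb ∈ bs.zip bs', GStep bb.1.2 g' bb.2.2) →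
      g'.pid ∩ ({p, q} : Set ℕ) = ∅ →
      GStep (.branch p q bs) g' (.branch p q bs')
  | recur {t : ℕ} {G G' : Global} {g : Pref} :
      GStep (Global.subst t (.mu t G) G) g G' →
      GStep (.mu t G) g G'

inductive GSteps : Global → List Pref → Global → Prop
  | refl (G : Global) : GSteps G [] G
  | cons {G G₁ G₂ : Global} {g : Pref} {tr : List Pref} :
      GStep G g G₁ → GSteps G₁ tr G₂ → GSteps G (g :: tr) G₂

def GTraces (G : Global) : Set (List Pref) := {tr | ∃ G', GSteps G tr G'}

/-! ### Local types -/

inductive Local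
  | send (q : ℕ) (m : Msg) (T : Local)
  | recv (p : ℕ) (m : Msg) (T : Local)
  | sel (q : ℕ) (bs : List (Label × Local))
  | bra (p : ℕ) (bs : List (Label × Local))
  | var (t : ℕ)
  | mu (t : ℕ) (T : Local)
  | lend

namespace Local

def subst (t : ℕ) (H : Local) : Local → Local
  | send q m T => send q m (subst t H T)
  | recv p m T => recv p m (subst t H T)
  | sel q bs => sel q (bs.attach.map fun ⟨⟨l, T⟩, h⟩ => (l, subst t H T))
  | bra p bs => bra p (bs.attach.map fun ⟨⟨l, T⟩, h⟩ => (l, subst t H T))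
  | var s => if s = t then H else var s
  | mu s T => if s = t then mu s T else mu s (subst t H T)
  | lend => lend
decreasing_by
  all_goals simp_wf
  all_goals try (have := List.sizeOf_lt_of_mem h; simp only [Prod.mk.sizeOf_spec] at this)
  all_goals try simp only [Local.sel.sizeOf_spec, Local.bra.sizeOf_spec, Local.mu.sizeOf_spec] at *
  all_goals omega

end Local

/-- Local labels `ℓ ::= q!m | p?m`. -/
inductive LLabel
  | send (q : ℕ) (m : Msg)
  | recv (p : ℕ) (m : Msg)
deriving DecidableEq

/-- The labelled transition system over local types. -/
inductive LStep : Local → LLabel → Local → Prop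
  | send {q : ℕ} {m : Msg} {T : Local} : LStep (.send q m T) (.send q m) T
  | recv {p : ℕ} {m : Msg} {T : Local} : LStep (.recv p m T) (.recv p m) T
  | sel {q : ℕ} {bs : List (Label × Local)} {l : Label} {T : Local} :
      (l, T) ∈ bs → LStep (.sel q bs) (.send q (.lab l)) T
  | bra {p : ℕ} {bs : List (Label × Local)} {l : Label} {T : Local} :
      (l, T) ∈ bs → LStep (.bra p bs) (.recv p (.lab l)) T
  | recur {t : ℕ} {T T' : Local} {ℓ : LLabel} :
      LStep (Local.subst t (.mu t T) T) ℓ T' → LStep (.mu t T) ℓ T'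

/-- The set of labels occurring in a list of local branches. -/
def labelsOf (bs : List (Label × Local)) : Set Label := {l | ∃ T, (l, T) ∈ bs}

/-! ### Merging of local types -/

mutual
  /-- The (partial, relationally presented) merge operator `T₁ ⊔ T₂ = T₃` on local types:
  homomorphic everywhere except at branchings, which are merged by taking the union
  of branches, merging continuations of common labels. -/
  inductive Merge : Local → Local → Local → Prop
    | send {q m T₁ T₂ T₃} : Merge T₁ T₂ T₃ → Merge (.send q m T₁) (.send q m T₂) (.send q m T₃)
    | recv {p m T₁ T₂ T₃} : Merge T₁ T₂ T₃ → Merge (.recv p m T₁) (.recv p m T₂) (.recv p m T₃)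
    | sel {q bs₁ bs₂ bs₃} : MergeBs bs₁ bs₂ bs₃ → Merge (.sel q bs₁) (.sel q bs₂) (.sel q bs₃)
    | bra {p : ℕ} {bs₁ bs₂ bs₃ : List (Label × Local)} :
        labelsOf bs₃ = labelsOf bs₁ ∪ labelsOf bs₂ →
        (∀ l T₃, (l, T₃) ∈ bs₃ → MergeBranch bs₁ bs₂ l T₃) →
        Merge (.bra p bs₁) (.bra p bs₂) (.bra p bs₃)
    | var {t} : Merge (.var t) (.var t) (.var t)
    | mu {t T₁ T₂ T₃} : Merge T₁ T₂ T₃ → Merge (.mu t T₁) (.mu t T₂) (.mu t T₃)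
    | lend : Merge .lend .lend .lend

  /-- Pointwise merging of selection branches (same labels in the same order). -/
  inductive MergeBs : List (Label × Local) → List (Label × Local) → List (Label × Local) → Prop
    | nil : MergeBs [] [] []
    | cons {l T₁ T₂ T₃ bs₁ bs₂ bs₃} :
        Merge T₁ T₂ T₃ → MergeBs bs₁ bs₂ bs₃ →
        MergeBs ((l, T₁) :: bs₁) ((l, T₂) :: bs₂) ((l, T₃) :: bs₃)

  /-- How a branch `(l, T₃)` of a merged branching arises from the two merged lists. -/
  inductive MergeBranch : List (Label × Local) → List (Label × Local) → Label → Local → Prop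
    | both {bs₁ bs₂ l T₁ T₂ T₃} :
        (l, T₁) ∈ bs₁ → (l, T₂) ∈ bs₂ → Merge T₁ T₂ T₃ → MergeBranch bs₁ bs₂ l T₃
    | left {bs₁ bs₂ l T₃} :
        (l, T₃) ∈ bs₁ → l ∉ labelsOf bs₂ → MergeBranch bs₁ bs₂ l T₃
    | right {bs₁ bs₂ l T₃} :
        (l, T₃) ∈ bs₂ → l ∉ labelsOf bs₁ → MergeBranch bs₁ bs₂ l T₃
end

/-- Iterated merge `⊔ᵢ Tᵢ` of a (nonempty) family of local types. -/
inductive MergeList : List Local → Local → Prop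
  | single {T} : MergeList [T] T
  | cons {T T' T'' : Local} {Ts : List Local} :
      MergeList Ts T' → Merge T T' T'' → MergeList (T :: Ts) T''

/-! ### Projection of global types onto participants -/

/-- `Proj G r T` is the graph of the (partial) projection function `⌊G⌋r = T`. -/
inductive Proj : Global → ℕ → Local → Prop
  | comm_send {g : Pref} {G : Global} {r : ℕ} {T : Local} :
      r = g.sender → r ≠ g.receiver → Proj G r T →
      Proj (.comm g G) r (.send g.receiver g.msg T)
  | comm_recv {g : Pref} {G : Global} {r : ℕ} {T : Local} :
      r = g.receiver → r ≠ g.sender → Proj G r T →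
      Proj (.comm g G) r (.recv g.sender g.msg T)
  | comm_skip {g : Pref} {G : Global} {r : ℕ} {T : Local} :
      r ≠ g.sender → r ≠ g.receiver → Proj G r T →
      Proj (.comm g G) r T
  | branch_sel {p q : ℕ} {bs : List (Label × Global)} {bs' : List (Label × Local)} :
      p ≠ q →
      bs.length = bs'.length →
      (∀ bb ∈ bs.zip bs', bb.1.1 = bb.2.1) →
      (∀ bb ∈ bs.zip bs', Proj bb.1.2 p bb.2.2) →
      Proj (.branch p q bs) p (.sel q bs')
  | branch_bra {p q : ℕ} {bs : List (Label × Global)} {bs' : List (Label × Local)} :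
      p ≠ q →
      bs.length = bs'.length →
      (∀ bb ∈ bs.zip bs', bb.1.1 = bb.2.1) →
      (∀ bb ∈ bs.zip bs', Proj bb.1.2 q bb.2.2) →
      Proj (.branch p q bs) q (.bra p bs')
  | branch_merge {p q r : ℕ} {bs : List (Label × Global)} {Ts : List Local} {T : Local} :
      r ≠ p → r ≠ q →
      bs.length = Ts.length →
      (∀ bb ∈ bs.zip Ts, Proj bb.1.2 r bb.2) →
      MergeList Ts T →
      Proj (.branch p q bs) r T
  | mu_proj {t : ℕ} {G : Global} {r : ℕ} {T : Local} :
      Proj G r T → T ≠ .var t → Proj (.mu t G) r (.mu t T)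
  | mu_end {t : ℕ} {G : Global} {r : ℕ} :
      Proj G r (.var t) → Proj (.mu t G) r .lend
  | var {t r} : Proj (.var t) r (.var t)
  | gend {r} : Proj .gend r .lend

/-! ### Isomorphism of global types -/

/-- `Iso G₁ G₂` (`G₁ ≅ G₂`): the smallest congruence on global types containing
prefix commutativity, branching, and branching distributivity (branch index
sets are nonempty, as usual for multiparty session types). -/
inductive Iso : Global → Global → Prop
  | refl (G : Global) : Iso G G
  | symm {G G'} : Iso G G' → Iso G' G
  | trans {G G' G''} : Iso G G' → Iso G' G'' → Iso G G''
  | comm_cong {g : Pref} {G G'} : Iso G G' → Iso (.comm g G) (.comm g G')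
  | branch_cong {p q : ℕ} {bs bs' : List (Label × Global)} :
      bs.length = bs'.length →
      (∀ bb ∈ bs.zip bs', bb.1.1 = bb.2.1) →
      (∀ bb ∈ bs.zip bs', Iso bb.1.2 bb.2.2) →
      Iso (.branch p q bs) (.branch p q bs')
  | mu_cong {t : ℕ} {G G'} : Iso G G' → Iso (.mu t G) (.mu t G')
  | swap {g₁ g₂ : Pref} {G : Global} :
      g₁.pid ∩ g₂.pid = ∅ →
      Iso (.comm g₁ (.comm g₂ G)) (.comm g₂ (.comm g₁ G))
  | branching {p q : ℕ} {g : Pref} {bs : List (Label × Global)} :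
      bs ≠ [] →
      g.pid ∩ ({p, q} : Set ℕ) = ∅ →
      Iso (.branch p q (bs.map fun b => (b.1, .comm g b.2))) (.comm g (.branch p q bs))
  | distrib {p q r s : ℕ} {lsI : List Label} {bsJ : List (Label × Global)} :
      lsI ≠ [] → bsJ ≠ [] →
      ({p, q} : Set ℕ) ∩ ({r, s} : Set ℕ) = ∅ →
      Iso (.branch p q (lsI.map fun l => (l, .branch r s bsJ)))
          (.branch r s (bsJ.map fun bj => (bj.1, .branch p q (lsI.map fun l => (l, bj.2)))))

/-! ### Configurations and their synchronous semantics -/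

/-- A configuration: a family of local types, one per participant. -/
abbrev Config := ℕ → Local

/-- The synchronous transition `[Synch]` between configurations, labelled by
the communication `p → q : m` (the pair of dual local labels `q!m · p?m`). -/
inductive CStep : Config → Pref → Config → Prop
  | synch {Δ Δ' : Config} {p q : ℕ} {m : Msg} :
      p ≠ q →
      LStep (Δ p) (.send q m) (Δ' p) →
      LStep (Δ q) (.recv p m) (Δ' q) →
      (∀ r, r ≠ p → r ≠ q → Δ' r = Δ r) →
      CStep Δ ⟨p, q, m⟩ Δ'

/-- Multi-step synchronous execution of a configuration. -/
inductive CSteps : Config → List Pref → Config → Prop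
  | refl (Δ : Config) : CSteps Δ [] Δ
  | cons {Δ Δ₁ Δ₂ : Config} {g : Pref} {tr : List Pref} :
      CStep Δ g Δ₁ → CSteps Δ₁ tr Δ₂ → CSteps Δ (g :: tr) Δ₂

/-- The configuration trace set `T_S(Δ)`, identifying the synchronisation label
`q!m · p?m` with the global label `p → q : m`. -/
def CTraces (Δ : Config) : Set (List Pref) := {tr | ∃ Δ', CSteps Δ tr Δ'}

/-- Configuration traces `σ`: per-participant sequences of local labels. -/
abbrev CTrace := ℕ → List LLabel

/-- The execution relation `Δ ↝^σ_synch Δ'`, accumulating per participant the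
local labels of a sequence of `[Synch]` steps. -/
inductive Exec : Config → CTrace → Config → Prop
  | refl (Δ : Config) : Exec Δ (fun _ => []) Δ
  | step {Δ Δ₁ Δ₂ : Config} {σ : CTrace} {g : Pref} :
      Exec Δ σ Δ₁ → CStep Δ₁ g Δ₂ →
      Exec Δ
        (fun r =>
          if r = g.sender then σ r ++ [.send g.receiver g.msg]
          else if r = g.receiver then σ r ++ [.recv g.sender g.msg]
          else σ r)
        Δ₂

/-- Terminated configurations: no `[Synch]` transition is available. -/
def Terminated (Δ : Config) : Prop := ∀ g Δ', ¬ CStep Δ g Δ'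

/-- The denotation of a configuration: its set of terminated traces. -/
def Denot (Δ : Config) : Set CTrace := {σ | ∃ Δ', Exec Δ σ Δ' ∧ Terminated Δ'}

/-! ### Auxiliary: depth-indexed steps -/

inductive GStepN : ℕ → Global → Pref → Global → Prop
  | inter (n : ℕ) (g : Pref) (G : Global) : GStepN n (.comm g G) g G
  | selbra {n : ℕ} {p q : ℕ} {bs : List (Label × Global)} {l : Label} {Gk : Global} :
      (l, Gk) ∈ bs → GStepN n (.branch p q bs) ⟨p, q, .lab l⟩ Gk
  | iperm {n : ℕ} {G G' : Global} {g g' : Pref} :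
      GStepN n G g' G' → g.pid ∩ g'.pid = ∅ →
      GStepN n (.comm g G) g' (.comm g G')
  | sbperm {n : ℕ} {p q : ℕ} {bs bs' : List (Label × Global)} {g' : Pref} :
      bs.length = bs'.length →
      (∀ bb ∈ bs.zip bs', bb.1.1 = bb.2.1) →
      (∀ bb ∈ bs.zip bs', GStepN n bb.1.2 g' bb.2.2) →
      g'.pid ∩ ({p, q} : Set ℕ) = ∅ →
      GStepN n (.branch p q bs) g' (.branch p q bs')
  | recur {n : ℕ} {t : ℕ} {G G' : Global} {g : Pref} :
      GStepN n (Global.subst t (.mu t G) G) g G' →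
      GStepN (n+1) (.mu t G) g G'

theorem GStepN.mono : ∀ {n m : ℕ}, n ≤ m → ∀ {G g G'}, GStepN n G g G' → GStepN m G g G' := by
  intro n m hnm G g G' h
  induction h generalizing m with
  | inter => exact .inter _ _ _
  | selbra hm => exact .selbra hm
  | iperm _ hd ih => exact .iperm (ih hnm) hd
  | sbperm hl hlab _ hd ih => exact .sbperm hl hlab (fun bb hb => ih bb hb hnm) hd
  | @recur n t G G' g _ ih =>
    rcases Nat.exists_eq_add_of_le hnm with ⟨k, rfl⟩
    have : n + 1 + k = (n + k) + 1 := by omega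
    rw [this]
    exact .recur (ih (by omega))

private theorem exists_uniform {α : Type _} (L : List α) (P : ℕ → α → Prop)
    (mono : ∀ x n n', n ≤ n' → P n x → P n' x)
    (h : ∀ x ∈ L, ∃ n, P n x) : ∃ n, ∀ x ∈ L, P n x := by
  induction L with
  | nil => exact ⟨0, by simp⟩
  | cons a L ih =>
    rcases h a (by simp) with ⟨n₁, hn₁⟩
    rcases ih (fun x hx => h x (List.mem_cons_of_mem a hx)) with ⟨n₂, hn₂⟩
    refine ⟨max n₁ n₂, ?_⟩
    intro x hx
    rcases List.mem_cons.1 hx with rfl | hx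
    · exact mono _ _ _ (le_max_left _ _) hn₁
    · exact mono _ _ _ (le_max_right _ _) (hn₂ _ hx)

theorem gstep_iff_gstepN {G g G'} : GStep G g G' ↔ ∃ n, GStepN n G g G' := by
  constructor
  · intro h
    induction h with
    | inter => exact ⟨0, .inter _ _ _⟩
    | selbra hm => exact ⟨0, .selbra hm⟩
    | iperm _ hd ih => rcases ih with ⟨n, hn⟩; exact ⟨n, .iperm hn hd⟩
    | @sbperm p q bs bs' g' hl hlab _ hd ih =>
      rcases exists_uniform _ (fun n (bb : (Label × Global) × (Label × Global)) => GStepN n bb.1.2 g' bb.2.2)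
        (fun x n n' hle hx => GStepN.mono hle hx) ih with ⟨n, hn⟩
      exact ⟨n, .sbperm hl hlab hn hd⟩
    | recur _ ih => rcases ih with ⟨n, hn⟩; exact ⟨n+1, .recur hn⟩
  · rintro ⟨n, h⟩
    induction h with
    | inter => exact .inter _ _
    | selbra hm => exact .selbra hm
    | iperm _ hd ih => exact .iperm ih hd
    | sbperm hl hlab _ hd ih => exact .sbperm hl hlab ih hd
    | recur _ ih => exact .recur ih

/-! ### Depth-list indexed runs -/

inductive GStepsL : List ℕ → Global → List Pref → Global → Prop
  | refl (G : Global) : GStepsL [] G [] G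
  | cons {m : ℕ} {ms : List ℕ} {G G₁ G₂ : Global} {g : Pref} {tr : List Pref} :
      GStepN m G g G₁ → GStepsL ms G₁ tr G₂ → GStepsL (m :: ms) G (g :: tr) G₂

theorem GStepsL.length_eq {ms G tr G'} (h : GStepsL ms G tr G') : ms.length = tr.length := by
  induction h with
  | refl => rfl
  | cons _ _ ih => simpa using ih

theorem gsteps_iff_gstepsL {G tr G'} : GSteps G tr G' ↔ ∃ ms, GStepsL ms G tr G' := by
  constructor
  · intro h
    induction h with
    | refl G => exact ⟨[], .refl G⟩
    | cons hst _ ih =>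
      rcases ih with ⟨ms, hms⟩
      rcases gstep_iff_gstepN.1 hst with ⟨m, hm⟩
      exact ⟨m :: ms, .cons hm hms⟩
  · rintro ⟨ms, h⟩
    induction h with
    | refl G => exact .refl G
    | cons hst _ ih => exact .cons (gstep_iff_gstepN.2 ⟨_, hst⟩) ih

theorem GStepsL.append {ms₁ ms₂ G₁ u v G₂ G₃} (h₁ : GStepsL ms₁ G₁ u G₂)
    (h₂ : GStepsL ms₂ G₂ v G₃) : GStepsL (ms₁ ++ ms₂) G₁ (u ++ v) G₃ := by
  induction h₁ with
  | refl => exact h₂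
  | cons hst _ ih => exact .cons hst (ih h₂)

theorem GStepsL.split {ms₁ ms₂ G₁ u v G₃} (h : GStepsL (ms₁ ++ ms₂) G₁ (u ++ v) G₃)
    (hlen : ms₁.length = u.length) : ∃ G₂, GStepsL ms₁ G₁ u G₂ ∧ GStepsL ms₂ G₂ v G₃ := by
  induction u generalizing ms₁ G₁ with
  | nil =>
    rw [List.length_nil, List.length_eq_zero_iff] at hlen
    subst hlen
    exact ⟨G₁, .refl _, h⟩
  | cons g u ih =>
    cases ms₁ with
    | nil => simp at hlen
    | cons m ms₁ =>
      cases h with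
      | cons hst hrest =>
        rcases ih hrest (by simpa using hlen) with ⟨G₂, ha, hb⟩
        exact ⟨G₂, .cons hst ha, hb⟩
/-! ### Forall₂ helpers -/

theorem zip_to_forall₂ {α β : Type _} {l₁ : List α} {l₂ : List β} {P : α → β → Prop}
    (hlen : l₁.length = l₂.length) (h : ∀ bb ∈ l₁.zip l₂, P bb.1 bb.2) : List.Forall₂ P l₁ l₂ :=
  List.forall₂_iff_zip.2 ⟨hlen, fun hab => h _ hab⟩

theorem forall₂_to_zip {α β : Type _} {l₁ : List α} {l₂ : List β} {P : α → β → Prop}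
    (h : List.Forall₂ P l₁ l₂) :
    l₁.length = l₂.length ∧ ∀ bb ∈ l₁.zip l₂, P bb.1 bb.2 := by
  rcases List.forall₂_iff_zip.1 h with ⟨h₁, h₂⟩
  exact ⟨h₁, fun bb hb => h₂ hb⟩

theorem forall₂_exists {α β γ : Type _} {l₁ : List α} {l₂ : List β}
    {R : α → β → Prop} {S : α → γ → Prop}
    (h : List.Forall₂ R l₁ l₂) (f : ∀ a b, R a b → ∃ c, S a c) :
    ∃ l₃, List.Forall₂ S l₁ l₃ := by
  induction h with
  | nil => exact ⟨[], .nil⟩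
  | cons hab _ ih =>
    rcases ih with ⟨l₃, hl₃⟩
    rcases f _ _ hab with ⟨c, hc⟩
    exact ⟨c :: l₃, .cons hc hl₃⟩

theorem forall₂_interp {α β γ : Type _} {l₁ : List α} {l₂ : List β}
    {R : α → β → Prop} {S : α → γ → Prop} {T : γ → β → Prop}
    (h : List.Forall₂ R l₁ l₂) (f : ∀ a b, R a b → ∃ c, S a c ∧ T c b) :
    ∃ l₃, List.Forall₂ S l₁ l₃ ∧ List.Forall₂ T l₃ l₂ := by
  induction h with
  | nil => exact ⟨[], .nil, .nil⟩
  | cons hab _ ih =>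
    rcases ih with ⟨l₃, hS, hT⟩
    rcases f _ _ hab with ⟨c, hc₁, hc₂⟩
    exact ⟨c :: l₃, .cons hc₁ hS, .cons hc₂ hT⟩

theorem forall₂_comp {α β γ : Type _} {l₁ : List α} {l₂ : List β} {l₃ : List γ}
    {R : α → β → Prop} {S : β → γ → Prop} {T : α → γ → Prop}
    (h₁ : List.Forall₂ R l₁ l₂) (h₂ : List.Forall₂ S l₂ l₃)
    (f : ∀ a b c, R a b → S b c → T a c) : List.Forall₂ T l₁ l₃ := by
  induction h₁ generalizing l₃ with
  | nil => cases h₂; exact .nil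
  | cons hab _ ih =>
    cases h₂ with
    | cons hbc h₂ => exact .cons (f _ _ _ hab hbc) (ih h₂)

theorem forall₂_mem_right {α β : Type _} {l₁ : List α} {l₂ : List β} {R : α → β → Prop}
    (h : List.Forall₂ R l₁ l₂) {y : β} (hy : y ∈ l₂) : ∃ x ∈ l₁, R x y := by
  induction h with
  | nil => cases hy
  | cons hab _ ih =>
    rcases List.mem_cons.1 hy with rfl | hy
    · exact ⟨_, by simp, hab⟩
    · rcases ih hy with ⟨x, hx, hxy⟩
      exact ⟨x, by simp [hx], hxy⟩

theorem forall₂_map_same {α β γ : Type _} {l : List α} {f : α → β} {g : α → γ}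
    {R : β → γ → Prop} (h : ∀ a ∈ l, R (f a) (g a)) :
    List.Forall₂ R (l.map f) (l.map g) := by
  induction l with
  | nil => exact .nil
  | cons a l ih =>
    exact .cons (h a (by simp)) (ih fun a ha => h a (List.mem_cons_of_mem _ ha))

theorem forall₂_map_map {α β γ δ : Type _} {l₁ : List α} {l₂ : List β}
    {R : α → β → Prop} {S : γ → δ → Prop} {f : α → γ} {g : β → δ}
    (h : List.Forall₂ R l₁ l₂) (hf : ∀ a b, R a b → S (f a) (g b)) :
    List.Forall₂ S (l₁.map f) (l₂.map g) := by
  induction h with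
  | nil => exact .nil
  | cons hab _ ih => exact .cons (hf _ _ hab) ih

theorem forall₂_set {α β : Type _} {l₁ : List α} {l₂ : List β} {R : α → β → Prop}
    (h : List.Forall₂ R l₁ l₂) {k : ℕ} {y : β} (hk : k < l₁.length)
    (hy : R (l₁.get ⟨k, hk⟩) y) : List.Forall₂ R l₁ (l₂.set k y) := by
  induction h generalizing k with
  | nil => simp at hk
  | cons hab h ih =>
    cases k with
    | zero => exact .cons hy h
    | succ k => exact .cons hab (ih (by simpa using hk) hy)

/-! ### Pointwise branch runs -/

def BRun (ms : List ℕ) (tr : List Pref) (b b' : Label × Global) : Prop :=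
  b.1 = b'.1 ∧ GStepsL ms b.2 tr b'.2

def BStep (m : ℕ) (g : Pref) (b b' : Label × Global) : Prop :=
  b.1 = b'.1 ∧ GStepN m b.2 g b'.2

theorem forall₂_brun_nil {bs bs₂ : List (Label × Global)}
    (h : List.Forall₂ (BRun [] []) bs bs₂) : bs₂ = bs := by
  induction h with
  | nil => rfl
  | @cons a b l₁ l₂ hab _ ih =>
    obtain ⟨la, Ga⟩ := a
    obtain ⟨lb, Gb⟩ := b
    obtain ⟨h1, h2⟩ := hab
    cases h2
    simp_all

theorem forall₂_brun_refl (bs : List (Label × Global)) :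
    List.Forall₂ (BRun [] []) bs bs :=
  List.forall₂_same.2 fun _ _ => ⟨rfl, .refl _⟩

theorem forall₂_brun_cons_inv {m ms g tr} {bs bs₂ : List (Label × Global)}
    (h : List.Forall₂ (BRun (m :: ms) (g :: tr)) bs bs₂) :
    ∃ bs₁, List.Forall₂ (BStep m g) bs bs₁ ∧ List.Forall₂ (BRun ms tr) bs₁ bs₂ := by
  apply forall₂_interp h
  rintro a b ⟨hl, hr⟩
  cases hr with
  | @cons _ _ _ G₁ _ _ _ hst hrest => exact ⟨(a.1, G₁), ⟨rfl, hst⟩, ⟨hl, hrest⟩⟩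

theorem forall₂_brun_comp {ms₁ ms₂ u v} {bs bs₁ bs₂ : List (Label × Global)}
    (h₁ : List.Forall₂ (BRun ms₁ u) bs bs₁) (h₂ : List.Forall₂ (BRun ms₂ v) bs₁ bs₂) :
    List.Forall₂ (BRun (ms₁ ++ ms₂) (u ++ v)) bs bs₂ :=
  forall₂_comp h₁ h₂ fun _ _ _ ha hb => ⟨ha.1.trans hb.1, ha.2.append hb.2⟩

/-! ### Inversion lemmas -/

theorem GStepN.comm_inv {m g G g' X} (h : GStepN m (.comm g G) g' X) :
    (g' = g ∧ X = G) ∨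
    (∃ G₁, X = .comm g G₁ ∧ g.pid ∩ g'.pid = ∅ ∧ GStepN m G g' G₁) := by
  cases h with
  | inter => exact .inl ⟨rfl, rfl⟩
  | iperm hs hd => exact .inr ⟨_, rfl, hd, hs⟩

theorem GStepN.branch_inv {m p q bs g' X} (h : GStepN m (.branch p q bs) g' X) :
    (∃ l Gk, g' = ⟨p, q, .lab l⟩ ∧ (l, Gk) ∈ bs ∧ X = Gk) ∨
    (∃ bs', X = .branch p q bs' ∧ g'.pid ∩ ({p, q} : Set ℕ) = ∅ ∧
      List.Forall₂ (BStep m g') bs bs') := by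
  cases h with
  | selbra hm => exact .inl ⟨_, _, rfl, hm, rfl⟩
  | sbperm hl hlab hst hd =>
    refine .inr ⟨_, rfl, hd, zip_to_forall₂ hl fun bb hb => ⟨hlab bb hb, hst bb hb⟩⟩

theorem GStepN.mu_inv {m t G g X} (h : GStepN m (.mu t G) g X) :
    ∃ m', m = m' + 1 ∧ GStepN m' (Global.subst t (.mu t G) G) g X := by
  cases h with
  | recur hs => exact ⟨_, rfl, hs⟩

theorem GStepN.sbperm' {n p q g'} {bs bs' : List (Label × Global)}
    (h : List.Forall₂ (BStep n g') bs bs') (hd : g'.pid ∩ ({p, q} : Set ℕ) = ∅) :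
    GStepN n (.branch p q bs) g' (.branch p q bs') := by
  rcases forall₂_to_zip h with ⟨hlen, hz⟩
  exact .sbperm hlen (fun bb hb => (hz bb hb).1) (fun bb hb => (hz bb hb).2) hd

theorem GStepsL.nil_inv {ms G G'} (h : GStepsL ms G [] G') : ms = [] ∧ G' = G := by
  cases h; exact ⟨rfl, rfl⟩

theorem GStepsL.cons_inv {ms G g tr G₂} (h : GStepsL ms G (g :: tr) G₂) :
    ∃ m ms' G₁, ms = m :: ms' ∧ GStepN m G g G₁ ∧ GStepsL ms' G₁ tr G₂ := by
  cases h with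
  | cons hst hrest => exact ⟨_, _, _, rfl, hst, hrest⟩
/-! ### Decomposition of runs of a `comm` -/

theorem comm_run_iff {ms : List ℕ} {g : Pref} {G : Global} {tr : List Pref} {Gf : Global} :
    GStepsL ms (.comm g G) tr Gf ↔
    ((∀ x ∈ tr, g.pid ∩ x.pid = ∅) ∧ ms.length = tr.length ∧
        ∃ G₂, GStepsL ms G tr G₂ ∧ Gf = .comm g G₂)
    ∨ (∃ u v msu m msv, tr = u ++ g :: v ∧ ms = msu ++ m :: msv ∧ msu.length = u.length ∧
        (∀ x ∈ u, g.pid ∩ x.pid = ∅) ∧ GStepsL (msu ++ msv) G (u ++ v) Gf) := by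
  constructor
  · intro h
    induction tr generalizing ms G with
    | nil =>
      rcases h.nil_inv with ⟨rfl, rfl⟩
      exact .inl ⟨by simp, rfl, G, .refl G, rfl⟩
    | cons g' tr' ih =>
      rcases h.cons_inv with ⟨m, ms', G₁, rfl, hst, hrest⟩
      rcases hst.comm_inv with ⟨rfl, rfl⟩ | ⟨G₂', rfl, hd, hs⟩
      · exact .inr ⟨[], tr', [], m, ms', rfl, rfl, rfl, by simp, hrest⟩
      · rcases ih hrest with ⟨hdisj, hlen, G₂, hrun, rfl⟩ |
          ⟨u, v, msu, m', msv, rfl, rfl, hlen, hu, hrun⟩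
        · refine .inl ⟨?_, by simp [hlen], G₂, .cons hs hrun, rfl⟩
          intro x hx
          rcases List.mem_cons.1 hx with rfl | hx
          · exact hd
          · exact hdisj x hx
        · refine .inr ⟨g' :: u, v, m :: msu, m', msv, rfl, rfl, by simp [hlen], ?_, .cons hs hrun⟩
          intro x hx
          rcases List.mem_cons.1 hx with rfl | hx
          · exact hd
          · exact hu x hx
  · rintro (⟨hdisj, hlen, G₂, hrun, rfl⟩ | ⟨u, v, msu, m, msv, rfl, rfl, hlen, hu, hrun⟩)
    · clear hlen
      induction hrun with
      | refl => exact .refl _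
      | @cons m ms G G₁ G₂ g' tr hst hrest ih =>
        exact .cons (.iperm hst (hdisj g' (by simp)))
          (ih (fun x hx => hdisj x (List.mem_cons_of_mem _ hx)))
    · induction u generalizing msu G with
      | nil =>
        rw [List.length_nil, List.length_eq_zero_iff] at hlen
        subst hlen
        exact .cons (.inter m g G) hrun
      | cons x u' ihu =>
        cases msu with
        | nil => simp at hlen
        | cons mu msu' =>
          rw [List.cons_append] at hrun
          rcases hrun.cons_inv with ⟨m₁, ms₁, G₁, heq, hst, hrest⟩
          injection heq with h1 h2
          subst h1; subst h2
          exact .cons (.iperm hst (hu x (by simp)))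
            (ihu msu' (by simpa using hlen) (fun y hy => hu y (List.mem_cons_of_mem _ hy)) hrest)

/-! ### Decomposition of runs of a `branch` -/

theorem branch_run_iff {ms : List ℕ} {p q : ℕ} {bs : List (Label × Global)} {tr : List Pref}
    {Gf : Global} :
    GStepsL ms (.branch p q bs) tr Gf ↔
    ((∀ x ∈ tr, x.pid ∩ ({p, q} : Set ℕ) = ∅) ∧ ms.length = tr.length ∧
        ∃ bs₂, List.Forall₂ (BRun ms tr) bs bs₂ ∧ Gf = .branch p q bs₂)
    ∨ (∃ u l v msu m msv bsu X, tr = u ++ ⟨p, q, .lab l⟩ :: v ∧ ms = msu ++ m :: msv ∧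
        msu.length = u.length ∧ (∀ x ∈ u, x.pid ∩ ({p, q} : Set ℕ) = ∅) ∧
        List.Forall₂ (BRun msu u) bs bsu ∧ (l, X) ∈ bsu ∧ GStepsL msv X v Gf) := by
  constructor
  · intro h
    induction tr generalizing ms bs with
    | nil =>
      rcases h.nil_inv with ⟨rfl, rfl⟩
      exact .inl ⟨by simp, rfl, bs, forall₂_brun_refl bs, rfl⟩
    | cons g' tr' ih =>
      rcases h.cons_inv with ⟨m, ms', G₁, rfl, hst, hrest⟩
      rcases hst.branch_inv with ⟨l, Gk, rfl, hm, rfl⟩ | ⟨bs', rfl, hd, hf⟩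
      · exact .inr ⟨[], l, tr', [], m, ms', bs, _, rfl, rfl, rfl, by simp,
          forall₂_brun_refl bs, hm, hrest⟩
      · rcases ih hrest with ⟨hdisj, hlen, bs₂, hf₂, rfl⟩ |
          ⟨u, l, v, msu, m', msv, bsu, X, rfl, rfl, hlen, hu, hfu, hmem, hrun⟩
        · refine .inl ⟨?_, by simp [hlen], bs₂, ?_, rfl⟩
          · intro x hx
            rcases List.mem_cons.1 hx with rfl | hx
            · exact hd
            · exact hdisj x hx
          · refine forall₂_comp hf hf₂ ?_
            rintro a b c ⟨h1, h2⟩ ⟨h3, h4⟩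
            exact ⟨h1.trans h3, .cons h2 h4⟩
        · refine .inr ⟨g' :: u, l, v, m :: msu, m', msv, bsu, X, rfl, rfl, by simp [hlen], ?_,
            forall₂_comp hf hfu (fun a b c ha hb => ⟨ha.1.trans hb.1, .cons ha.2 hb.2⟩),
            hmem, hrun⟩
          intro x hx
          rcases List.mem_cons.1 hx with rfl | hx
          · exact hd
          · exact hu x hx
  · rintro (⟨hdisj, hlen, bs₂, hf, rfl⟩ |
      ⟨u, l, v, msu, m, msv, bsu, X, rfl, rfl, hlen, hu, hfu, hmem, hrun⟩)
    · induction tr generalizing ms bs with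
      | nil =>
        rw [List.length_nil, List.length_eq_zero_iff] at hlen
        subst hlen
        rw [forall₂_brun_nil hf]
        exact .refl _
      | cons g' tr' ih =>
        cases ms with
        | nil => simp at hlen
        | cons m ms' =>
          rcases forall₂_brun_cons_inv hf with ⟨bs₁, hstep, hrun'⟩
          exact .cons (GStepN.sbperm' hstep (hdisj g' (by simp)))
            (ih (fun x hx => hdisj x (List.mem_cons_of_mem _ hx)) (by simpa using hlen) hrun')
    · have hbody : GStepsL (msu) (.branch p q bs) u (.branch p q bsu) := by
        clear hmem hrun
        induction u generalizing msu bs with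
        | nil =>
          rw [List.length_nil, List.length_eq_zero_iff] at hlen
          subst hlen
          rw [forall₂_brun_nil hfu]
          exact .refl _
        | cons x u' ihu =>
          cases msu with
          | nil => simp at hlen
          | cons mu msu' =>
            rcases forall₂_brun_cons_inv hfu with ⟨bs₁, hstep, hrun'⟩
            exact .cons (GStepN.sbperm' hstep (hu x (by simp)))
              (ihu msu' (by simpa using hlen) (fun y hy => hu y (List.mem_cons_of_mem _ hy)) hrun')
      exact hbody.append (.cons (.selbra hmem) hrun)
theorem subst_comm {t H g G} : Global.subst t H (.comm g G) = .comm g (Global.subst t H G) := by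
  rw [Global.subst]

theorem subst_var {t H s} : Global.subst t H (.var s) = if s = t then H else .var s := by
  rw [Global.subst]

theorem subst_mu {t H s G} : Global.subst t H (.mu s G) =
    if s = t then .mu s G else .mu s (Global.subst t H G) := by
  rw [Global.subst]

theorem subst_gend {t H} : Global.subst t H .gend = .gend := by
  rw [Global.subst]

theorem subst_branch {t H p q bs} : Global.subst t H (.branch p q bs) =
    .branch p q (bs.map fun b => (b.1, Global.subst t H b.2)) := by
  rw [Global.subst]
  congr 1
  have h1 : ∀ x ∈ bs.attach,
      (fun (y : {b // b ∈ bs}) => ((fun ⟨⟨l, G⟩, _⟩ => (l, Global.subst t H G) :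
        {b // b ∈ bs} → Label × Global) y)) x
      = (fun (y : {b // b ∈ bs}) => (y.val.1, Global.subst t H y.val.2)) x := by
    rintro ⟨⟨l, G⟩, h⟩ _
    rfl
  rw [List.map_congr_left h1]
  exact List.attach_map_val (l := bs) (f := fun b => (b.1, Global.subst t H b.2))
theorem Iso.branch_cong' {p q : ℕ} {bs bs' : List (Label × Global)}
    (h : List.Forall₂ (fun b b' => b.1 = b'.1 ∧ Iso b.2 b'.2) bs bs') :
    Iso (.branch p q bs) (.branch p q bs') := by
  rcases forall₂_to_zip h with ⟨hlen, hz⟩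
  exact .branch_cong hlen (fun bb hb => (hz bb hb).1) (fun bb hb => (hz bb hb).2)

theorem iso_subst_left {t : ℕ} {H H' : Global} (hH : Iso H H') :
    ∀ G, Iso (Global.subst t H G) (Global.subst t H' G) := by
  have main : ∀ n G, sizeOf G ≤ n → Iso (Global.subst t H G) (Global.subst t H' G) := by
    intro n
    induction n with
    | zero =>
      intro G hG
      cases G <;> simp +arith +decide at hG
    | succ n ih =>
      intro G hG
      cases G with
      | comm g G =>
        rw [subst_comm, subst_comm]
        refine .comm_cong (ih G ?_)
        have h3 : sizeOf G < sizeOf (Global.comm g G) := by simp +arith +decide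
        omega
      | branch p q bs =>
        rw [subst_branch, subst_branch]
        refine Iso.branch_cong' (forall₂_map_same fun b hb => ⟨rfl, ih b.2 ?_⟩)
        have h1 := List.sizeOf_lt_of_mem hb
        have h2 : sizeOf b.2 < sizeOf b := by
          obtain ⟨lb, Gb⟩ := b
          simp +arith +decide
        have h3 : sizeOf bs < sizeOf (Global.branch p q bs) := by simp +arith +decide
        omega
      | var s =>
        rw [subst_var, subst_var]
        split
        · exact hH
        · exact .refl _
      | mu s G =>
        rw [subst_mu, subst_mu]
        split
        · exact .refl _
        · refine .mu_cong (ih G ?_)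
          have h3 : sizeOf G < sizeOf (Global.mu s G) := by simp +arith +decide
          omega
      | gend =>
        rw [subst_gend, subst_gend]
        exact .refl _
  exact fun G => main (sizeOf G) G le_rfl
theorem iso_subst_right {t : ℕ} {H : Global} :
    ∀ {G G'}, Iso G G' → Iso (Global.subst t H G) (Global.subst t H G') := by
  intro G G' h
  induction h with
  | refl G => exact .refl _
  | symm _ ih => exact .symm ih
  | trans _ _ ih₁ ih₂ => exact .trans ih₁ ih₂
  | comm_cong _ ih => rw [subst_comm, subst_comm]; exact .comm_cong ih
  | @branch_cong p q bs bs' hlen hlab hiso ih =>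
    rw [subst_branch, subst_branch]
    refine Iso.branch_cong' ?_
    refine forall₂_map_map (zip_to_forall₂
      (P := fun b b' => b.1 = b'.1 ∧ Iso (Global.subst t H b.2) (Global.subst t H b'.2))
      hlen fun bb hb => And.intro (hlab bb hb) (ih bb hb)) ?_
    rintro a b ⟨h1, h2⟩
    exact ⟨h1, h2⟩
  | @mu_cong s G G' hiso ih =>
    rw [subst_mu, subst_mu]
    split
    · exact .mu_cong hiso
    · exact .mu_cong ih
  | @swap g₁ g₂ G hd =>
    rw [subst_comm, subst_comm, subst_comm, subst_comm]
    exact .swap hd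
  | @branching p q g bs hne hd =>
    rw [subst_branch, subst_comm, subst_branch]
    have e1 : (bs.map fun b => (b.1, Global.comm g b.2)).map
        (fun b => (b.1, Global.subst t H b.2)) =
        (bs.map fun b => (b.1, Global.subst t H b.2)).map fun b => (b.1, Global.comm g b.2) := by
      simp only [List.map_map]
      apply List.map_congr_left
      intro a _
      simp [Function.comp, subst_comm]
    rw [e1]
    exact .branching (by simpa using hne) hd
  | @distrib p q r s lsI bsJ hI hJ hd =>
    rw [subst_branch, subst_branch]
    have e1 : (lsI.map fun l => (l, Global.branch r s bsJ)).map
        (fun b => (b.1, Global.subst t H b.2)) =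
        lsI.map fun l => (l, Global.branch r s
          (bsJ.map fun b => (b.1, Global.subst t H b.2))) := by
      simp only [List.map_map]
      apply List.map_congr_left
      intro a _
      simp [Function.comp, subst_branch]
    have e2 : ((bsJ.map fun bj => (bj.1, Global.branch p q (lsI.map fun l => (l, bj.2)))).map
        fun b => (b.1, Global.subst t H b.2)) =
        (bsJ.map fun b => (b.1, Global.subst t H b.2)).map
          fun bj => (bj.1, Global.branch p q (lsI.map fun l => (l, bj.2))) := by
      simp only [List.map_map]
      apply List.map_congr_left
      intro a _
      simp [Function.comp, subst_branch, List.map_map]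
    rw [e1, e2]
    exact .distrib hI (by simpa using hJ) hd

theorem iso_subst {t : ℕ} {H H' G G' : Global} (hH : Iso H H') (hG : Iso G G') :
    Iso (Global.subst t H G) (Global.subst t H' G') :=
  .trans (iso_subst_right hG) (iso_subst_left hH G')

theorem iso_mu_unfold {t : ℕ} {G G' : Global} (h : Iso G G') :
    Iso (Global.subst t (.mu t G) G) (Global.subst t (.mu t G') G') :=
  iso_subst (.mu_cong h) h
/-! ### Small facts about pids and splits -/

theorem pid_self_ne {g : Pref} (h : g.pid ∩ g.pid = ∅) : False := by
  have : g.sender ∈ g.pid ∩ g.pid := ⟨by simp [Pref.pid], by simp [Pref.pid]⟩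
  rw [h] at this
  exact this

theorem split_unique {α : Type _} {P : α → Prop} :
    ∀ {u₁ : List α} {x₁ : α} {v₁ : List α} {u₂ : List α} {x₂ : α} {v₂ : List α},
      u₁ ++ x₁ :: v₁ = u₂ ++ x₂ :: v₂ → (∀ y ∈ u₁, P y) → (∀ y ∈ u₂, P y) →
      ¬ P x₁ → ¬ P x₂ → u₁ = u₂ ∧ x₁ = x₂ ∧ v₁ = v₂ := by
  intro u₁
  induction u₁ with
  | nil =>
    rintro x₁ v₁ u₂ x₂ v₂ heq _ hu₂ hx₁ hx₂
    cases u₂ with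
    | nil => simp_all
    | cons a u₂ =>
      simp only [List.nil_append, List.cons_append, List.cons.injEq] at heq
      obtain ⟨rfl, -⟩ := heq
      exact absurd (hu₂ x₁ (by simp)) hx₁
  | cons a u₁ ih =>
    rintro x₁ v₁ u₂ x₂ v₂ heq hu₁ hu₂ hx₁ hx₂
    cases u₂ with
    | nil =>
      simp only [List.cons_append, List.nil_append, List.cons.injEq] at heq
      exact absurd (heq.1 ▸ hu₁ a (by simp)) hx₂
    | cons b u₂ =>
      simp only [List.cons_append, List.cons.injEq] at heq
      obtain ⟨rfl, heq⟩ := heq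
      rcases ih heq (fun y hy => hu₁ y (List.mem_cons_of_mem _ hy))
        (fun y hy => hu₂ y (List.mem_cons_of_mem _ hy)) hx₁ hx₂ with ⟨rfl, rfl, rfl⟩
      exact ⟨rfl, rfl, rfl⟩

theorem ms_split_unique {ms₁ : List ℕ} {a : ℕ} {ms₂ ms₁' : List ℕ} {a' : ℕ} {ms₂' : List ℕ}
    (h : ms₁ ++ a :: ms₂ = ms₁' ++ a' :: ms₂') (hl : ms₁.length = ms₁'.length) :
    ms₁ = ms₁' ∧ a = a' ∧ ms₂ = ms₂' := by
  rcases List.append_inj h hl with ⟨rfl, h₂⟩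
  injection h₂ with h₃ h₄
  exact ⟨rfl, h₃, h₄⟩

/-! ### The swap axiom preserves runs -/

theorem swap_run {g₁ g₂ : Pref} (hd : g₁.pid ∩ g₂.pid = ∅) :
    ∀ {ms : List ℕ} {G : Global} {tr : List Pref} {Gf : Global},
      GStepsL ms (.comm g₁ (.comm g₂ G)) tr Gf →
      ∃ Gf', GStepsL ms (.comm g₂ (.comm g₁ G)) tr Gf' := by
  have hd' : g₂.pid ∩ g₁.pid = ∅ := by rw [Set.inter_comm]; exact hd
  intro ms G tr Gf h
  induction tr generalizing ms G with
  | nil =>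
    rcases h.nil_inv with ⟨rfl, rfl⟩
    exact ⟨_, .refl _⟩
  | cons g' tr' ih =>
    rcases h.cons_inv with ⟨m, ms', G₁, rfl, hst, hrest⟩
    rcases hst.comm_inv with ⟨rfl, rfl⟩ | ⟨X, rfl, hd₁, hs⟩
    · exact ⟨Gf, .cons (.iperm (.inter m g' G) hd') hrest⟩
    · rcases hs.comm_inv with ⟨rfl, rfl⟩ | ⟨Y, rfl, hd₂, hs₂⟩
      · exact ⟨Gf, .cons (.inter _ _ _) hrest⟩
      · rcases ih hrest with ⟨Gf', hrun'⟩
        exact ⟨Gf', .cons (.iperm (.iperm hs₂ hd₁) hd₂) hrun'⟩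
/-! ### More helpers -/

theorem forall₂_mem_left {α β : Type _} {l₁ : List α} {l₂ : List β} {R : α → β → Prop}
    (h : List.Forall₂ R l₁ l₂) {x : α} (hx : x ∈ l₁) : ∃ y ∈ l₂, R x y := by
  induction h with
  | nil => cases hx
  | cons hab _ ih =>
    rcases List.mem_cons.1 hx with rfl | hx
    · exact ⟨_, by simp, hab⟩
    · rcases ih hx with ⟨y, hy, hxy⟩
      exact ⟨y, by simp [hy], hxy⟩

theorem forall₂_map_left' {α β : Type _} {l : List α} {f : α → β} {R : β → α → Prop}
    (h : ∀ a ∈ l, R (f a) a) : List.Forall₂ R (l.map f) l := by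
  induction l with
  | nil => exact .nil
  | cons a l ih => exact .cons (h a (by simp)) (ih fun a ha => h a (List.mem_cons_of_mem _ ha))

theorem pid_mk {a b : ℕ} {c : Msg} : (Pref.mk a b c).pid = {a, b} := rfl

theorem comm_wrap_run {g : Pref} {ms G tr G₂} (hd : ∀ x ∈ tr, g.pid ∩ x.pid = ∅)
    (h : GStepsL ms G tr G₂) : GStepsL ms (.comm g G) tr (.comm g G₂) :=
  comm_run_iff.2 (.inl ⟨hd, h.length_eq, G₂, h, rfl⟩)

theorem branch_run_of_forall₂ {p q : ℕ} {ms tr} {bs bs₂ : List (Label × Global)}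
    (hdisj : ∀ x ∈ tr, x.pid ∩ ({p, q} : Set ℕ) = ∅) (hlen : ms.length = tr.length)
    (hf : List.Forall₂ (BRun ms tr) bs bs₂) :
    GStepsL ms (.branch p q bs) tr (.branch p q bs₂) :=
  branch_run_iff.2 (.inl ⟨hdisj, hlen, bs₂, hf, rfl⟩)

theorem branch_commit_run {p q : ℕ} {msu u msv v l X Gf m} {bs bsu : List (Label × Global)}
    (hdisj : ∀ x ∈ u, x.pid ∩ ({p, q} : Set ℕ) = ∅) (hlen : msu.length = u.length)
    (hf : List.Forall₂ (BRun msu u) bs bsu) (hmem : (l, X) ∈ bsu)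
    (htail : GStepsL msv X v Gf) :
    GStepsL (msu ++ m :: msv) (.branch p q bs) (u ++ ⟨p, q, .lab l⟩ :: v) Gf :=
  branch_run_iff.2 (.inr ⟨u, l, v, msu, m, msv, bsu, X, rfl, rfl, hlen, hdisj, hf, hmem, htail⟩)

/-! ### The branching axiom preserves runs (forward) -/

theorem branching_fwd {p q : ℕ} {g : Pref} {bs : List (Label × Global)}
    (hg : g.pid ∩ ({p, q} : Set ℕ) = ∅) (hbs : bs ≠ []) :
    ∀ {ms tr Gf}, GStepsL ms (.branch p q (bs.map fun b => (b.1, Global.comm g b.2))) tr Gf →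
    ∃ Gf', GStepsL ms (.comm g (.branch p q bs)) tr Gf' := by
  intro ms tr Gf h
  rcases branch_run_iff.1 h with ⟨hdisj, hlen, bs₂, hf, rfl⟩ |
    ⟨U, l, W, msU, m, msW, bsu, X, rfl, rfl, hlenU, hU, hfU, hmem, htail⟩
  · rw [List.forall₂_map_left_iff] at hf
    by_cases hgd : ∀ x ∈ tr, g.pid ∩ x.pid = ∅
    · obtain ⟨bs₂', hf'⟩ : ∃ bs₂', List.Forall₂ (BRun ms tr) bs bs₂' := by
        apply forall₂_exists hf
        rintro a c ⟨h1, h2⟩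
        rcases comm_run_iff.1 h2 with ⟨_, _, Y, hY, hc⟩ |
          ⟨u, v, msu, m, msv, htr, _, _, _, _⟩
        · exact ⟨(a.1, Y), rfl, hY⟩
        · exact absurd (hgd g (htr ▸ by simp)) pid_self_ne
      exact ⟨_, comm_wrap_run hgd (branch_run_of_forall₂ hdisj hlen hf')⟩
    · push_neg at hgd
      obtain ⟨x, hx, hxbad⟩ := hgd
      obtain ⟨b₀, hb₀⟩ := List.exists_mem_of_ne_nil bs hbs
      obtain ⟨c₀, hc₀, h1₀, h2₀⟩ : ∃ c₀ ∈ bs₂, (b₀.1 = c₀.1) ∧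
          GStepsL ms (Global.comm g b₀.2) tr c₀.2 := by
        rcases forall₂_mem_left hf hb₀ with ⟨c₀, hc₀, h1, h2⟩
        exact ⟨c₀, hc₀, h1, h2⟩
      rcases comm_run_iff.1 h2₀ with ⟨hda, _, _, _, _⟩ |
        ⟨u, v, msu, m, msv, htr, hms, hlenu, hu, hrun⟩
      · exact absurd (hda x hx) hxbad.ne_empty
      · subst htr
        subst hms
        obtain ⟨bs₂', hf'⟩ : ∃ bs₂',
            List.Forall₂ (BRun (msu ++ msv) (u ++ v)) bs bs₂' := by
          apply forall₂_exists hf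
          rintro a c ⟨h1, h2⟩
          rcases comm_run_iff.1 h2 with ⟨hda, _, _, _, _⟩ |
            ⟨u', v', msu', m', msv', htr', hms', hlenu', hu', hrun'⟩
          · exact absurd (hda x hx) hxbad.ne_empty
          · rcases split_unique (P := fun y => g.pid ∩ y.pid = ∅) htr'.symm
              (fun y hy => hu' y hy) (fun y hy => hu y hy) pid_self_ne pid_self_ne with
              ⟨rfl, -, rfl⟩
            rcases ms_split_unique hms' (by rw [hlenu', hlenu]) with ⟨rfl, rfl, rfl⟩
            exact ⟨(a.1, c.2), rfl, hrun'⟩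
        have h6 : GStepsL (msu ++ msv) (.branch p q bs) (u ++ v) (.branch p q bs₂') := by
          refine branch_run_of_forall₂ (fun y hy => hdisj y ?_) ?_ hf'
          · rcases List.mem_append.1 hy with hy | hy
            · exact List.mem_append.2 (.inl hy)
            · exact List.mem_append.2 (.inr (List.mem_cons_of_mem _ hy))
          · have := hlen
            simp only [List.length_append, List.length_cons] at this ⊢
            omega
        exact ⟨_, comm_run_iff.2 (.inr ⟨u, v, msu, m, msv, rfl, rfl, hlenu, hu, h6⟩)⟩
  · rw [List.forall₂_map_left_iff] at hfU
    by_cases hgd : ∀ x ∈ U, g.pid ∩ x.pid = ∅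
    · obtain ⟨bsY, hfY, hfT⟩ : ∃ bsY,
          List.Forall₂ (fun (b y : Label × Global) => b.1 = y.1 ∧ GStepsL msU b.2 U y.2) bs bsY ∧
          List.Forall₂ (fun (y c : Label × Global) => c = (y.1, Global.comm g y.2)) bsY bsu := by
        apply forall₂_interp hfU
        rintro a c ⟨h1, h2⟩
        rcases comm_run_iff.1 h2 with ⟨_, _, Y, hY, hc⟩ |
          ⟨u, v, msu, m', msv, htr, _, _, _, _⟩
        · refine ⟨(a.1, Y), ⟨rfl, hY⟩, ?_⟩
          obtain ⟨c1, c2⟩ := c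
          simp only at h1 hc ⊢
          exact Prod.ext h1.symm hc
        · exact absurd (hgd g (htr ▸ by simp)) pid_self_ne
      rcases forall₂_mem_right hfT hmem with ⟨y, hy, hXy⟩
      have hy1 : y.1 = l := by
        have := congrArg Prod.fst hXy
        simpa using this.symm
      have hX2 : X = Global.comm g y.2 := by
        have := congrArg Prod.snd hXy
        simpa using this
      have hyeq : (l, y.2) = y := Prod.ext hy1.symm rfl
      have hmid : GStepsL msU (.branch p q bs) U (.branch p q bsY) :=
        branch_run_of_forall₂ hU hlenU hfY
      have hsel : GStepsL [m] (.branch p q bsY) [⟨p, q, .lab l⟩] y.2 :=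
        .cons (.selbra (hyeq ▸ hy)) (.refl _)
      have hinner : GStepsL (msU ++ [m]) (.branch p q bs) (U ++ [⟨p, q, .lab l⟩]) y.2 :=
        hmid.append hsel
      have houter : GStepsL (msU ++ [m]) (.comm g (.branch p q bs)) (U ++ [⟨p, q, .lab l⟩])
          (.comm g y.2) := by
        refine comm_wrap_run ?_ hinner
        intro z hz
        rcases List.mem_append.1 hz with hz | hz
        · exact hgd z hz
        · rcases List.mem_singleton.1 hz with rfl
          rw [pid_mk]
          exact hg
      refine ⟨Gf, ?_⟩
      have h5 := houter.append (hX2 ▸ htail)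
      simp only [List.append_assoc, List.singleton_append] at h5
      exact h5
    · push_neg at hgd
      obtain ⟨x, hx, hxbad⟩ := hgd
      obtain ⟨a, ha, h1a, h2a⟩ : ∃ a ∈ bs, a.1 = l ∧
          GStepsL msU (Global.comm g a.2) U X := by
        rcases forall₂_mem_right hfU hmem with ⟨a, ha, h1, h2⟩
        exact ⟨a, ha, by simpa using h1, h2⟩
      rcases comm_run_iff.1 h2a with ⟨hda, _, _, _, _⟩ |
        ⟨u, v, msu, m₁, msv, htr, hms, hlenu, hu, hrun⟩
      · exact absurd (hda x hx) hxbad.ne_empty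
      · subst htr
        subst hms
        have hf' : List.Forall₂ (BRun (msu ++ msv) (u ++ v)) bs bsu := by
          refine List.Forall₂.imp ?_ hfU
          rintro b c ⟨h1, h2⟩
          rcases comm_run_iff.1 h2 with ⟨hda, _, _, _, _⟩ |
            ⟨u', v', msu', m', msv', htr', hms', hlenu', hu', hrun'⟩
          · exact absurd (hda x hx) hxbad.ne_empty
          · rcases split_unique (P := fun y => g.pid ∩ y.pid = ∅) htr'.symm
              (fun y hy => hu' y hy) (fun y hy => hu y hy) pid_self_ne pid_self_ne with
              ⟨rfl, -, rfl⟩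
            rcases ms_split_unique hms' (by rw [hlenu', hlenu]) with ⟨rfl, rfl, rfl⟩
            exact ⟨h1, hrun'⟩
        have hinner : GStepsL ((msu ++ msv) ++ m :: msW) (.branch p q bs)
            ((u ++ v) ++ ⟨p, q, .lab l⟩ :: W) Gf := by
          refine branch_commit_run (fun y hy => hU y ?_) ?_ hf' hmem htail
          · rcases List.mem_append.1 hy with hy | hy
            · exact List.mem_append.2 (.inl hy)
            · exact List.mem_append.2 (.inr (List.mem_cons_of_mem _ hy))
          · have h3 := hlenU
            simp only [List.length_append, List.length_cons] at h3 ⊢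
            omega
        refine ⟨Gf, ?_⟩
        have h5 := comm_run_iff.2 (.inr (⟨u, v ++ ⟨p, q, .lab l⟩ :: W, msu, m₁,
          msv ++ m :: msW, rfl, rfl, hlenu, hu, by
            rwa [← List.append_assoc, ← List.append_assoc]⟩ :
            ∃ _ _ _ _ _, _))
        simp only [List.append_assoc, List.cons_append] at h5 ⊢
        exact h5
/-! ### The branching axiom preserves runs (backward) -/

theorem branching_rev {p q : ℕ} {g : Pref} {bs : List (Label × Global)}
    (hg : g.pid ∩ ({p, q} : Set ℕ) = ∅) :
    ∀ {ms tr Gf}, GStepsL ms (.comm g (.branch p q bs)) tr Gf →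
    ∃ Gf', GStepsL ms (.branch p q (bs.map fun b => (b.1, Global.comm g b.2))) tr Gf' := by
  intro ms tr Gf h
  rcases comm_run_iff.1 h with ⟨hda, hlen, B, hρ, rfl⟩ |
    ⟨u, v, msu, m, msv, rfl, rfl, hlenu, hu, hρ⟩
  · rcases branch_run_iff.1 hρ with ⟨hdisj, _, bs₂, hf, rfl⟩ |
      ⟨U, l, W, msU, m, msW, bsu, X, rfl, rfl, hlenU, hU, hfU, hmem, htail⟩
    · refine ⟨_, branch_run_of_forall₂ hdisj hlen (forall₂_map_map (f := fun b => (b.1, Global.comm g b.2)) (g := fun b => (b.1, Global.comm g b.2)) hf ?_)⟩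
      rintro a b ⟨h1, h2⟩
      exact ⟨h1, comm_wrap_run hda h2⟩
    · refine ⟨_, branch_commit_run (fun y hy => hU y hy) hlenU
        (forall₂_map_map (f := fun b => (b.1, Global.comm g b.2)) (g := fun b => (b.1, Global.comm g b.2)) hfU ?_) (List.mem_map_of_mem (f := fun b => (b.1, Global.comm g b.2)) hmem)
        (comm_wrap_run (fun y hy => hda y ?_) htail)⟩
      · rintro a b ⟨h1, h2⟩
        exact ⟨h1, comm_wrap_run (fun y hy => hda y (by
          rw [List.mem_append]; exact .inl hy)) h2⟩
      · rw [List.mem_append]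
        exact .inr (List.mem_cons_of_mem _ hy)
  · rcases hρ.split hlenu with ⟨M, hρ₁, hρ₂⟩
    rcases branch_run_iff.1 hρ₁ with ⟨hdisj, hlen₁, bsm, hf, rfl⟩ |
      ⟨u₁, l, u₂, msu₁, m₂, msu₂, bsu₁, X, rfl, rfl, hlenu₁, hu₁, hfu₁, hmem, hτ₁⟩
    · have hA : GStepsL msu (.branch p q (bs.map fun b => (b.1, Global.comm g b.2))) u
          (.branch p q (bsm.map fun b => (b.1, Global.comm g b.2))) := by
        refine branch_run_of_forall₂ hdisj hlen₁ (forall₂_map_map (f := fun b => (b.1, Global.comm g b.2)) (g := fun b => (b.1, Global.comm g b.2)) hf ?_)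
        rintro a b ⟨h1, h2⟩
        exact ⟨h1, comm_wrap_run hu h2⟩
      have hstep : GStepN m (.branch p q (bsm.map fun b => (b.1, Global.comm g b.2))) g
          (.branch p q bsm) := by
        refine GStepN.sbperm' (forall₂_map_left' ?_) hg
        intro a _
        exact ⟨rfl, .inter m g a.2⟩
      exact ⟨Gf, hA.append (.cons hstep hρ₂)⟩
    · have hA : GStepsL msu₁ (.branch p q (bs.map fun b => (b.1, Global.comm g b.2))) u₁
          (.branch p q (bsu₁.map fun b => (b.1, Global.comm g b.2))) := by
        refine branch_run_of_forall₂ hu₁ hlenu₁ (forall₂_map_map (f := fun b => (b.1, Global.comm g b.2)) (g := fun b => (b.1, Global.comm g b.2)) hfu₁ ?_)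
        rintro a b ⟨h1, h2⟩
        exact ⟨h1, comm_wrap_run (fun y hy => hu y (by
          rw [List.mem_append]; exact .inl hy)) h2⟩
      have htl : GStepsL (msu₂ ++ m :: msv) (.comm g X) (u₂ ++ g :: v) Gf := by
        refine (comm_wrap_run (fun y hy => hu y (by
          rw [List.mem_append]; exact .inr (List.mem_cons_of_mem _ hy))) hτ₁).append
          (.cons (.inter m g M) hρ₂)
      have h5 := hA.append (GStepsL.cons (m := m₂)
        (.selbra (List.mem_map_of_mem (f := fun b => (b.1, Global.comm g b.2)) hmem)) htl)
      refine ⟨Gf, ?_⟩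
      simp only [List.append_assoc, List.cons_append] at h5 ⊢
      exact h5
/-! ### Distributivity preserves runs -/

theorem const_branch_run {p q : ℕ} {ms tr} {X X' : Global}
    (hdisj : ∀ x ∈ tr, x.pid ∩ ({p, q} : Set ℕ) = ∅) (h : GStepsL ms X tr X')
    (ls : List Label) :
    GStepsL ms (.branch p q (ls.map fun l => (l, X))) tr
      (.branch p q (ls.map fun l => (l, X'))) :=
  branch_run_of_forall₂ hdisj h.length_eq (forall₂_map_same fun _ _ => ⟨rfl, h⟩)

theorem pq_commit_bad {p q : ℕ} {l : Label} :
    ¬ ((Pref.mk p q (.lab l)).pid ∩ ({p, q} : Set ℕ) = ∅) := by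
  intro h
  have : p ∈ (Pref.mk p q (.lab l)).pid ∩ ({p, q} : Set ℕ) := ⟨by simp [pid_mk], by simp⟩
  rw [h] at this
  exact this

theorem distrib_fwd {p q r s : ℕ} {lsI : List Label} {bsJ : List (Label × Global)}
    (hI : lsI ≠ []) (hd : ({p, q} : Set ℕ) ∩ ({r, s} : Set ℕ) = ∅) :
    ∀ {ms tr Gf}, GStepsL ms (.branch p q (lsI.map fun l => (l, .branch r s bsJ))) tr Gf →
    ∃ Gf', GStepsL ms (.branch r s (bsJ.map fun bj =>
      (bj.1, .branch p q (lsI.map fun l => (l, bj.2))))) tr Gf' := by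
  have hd' : ({r, s} : Set ℕ) ∩ ({p, q} : Set ℕ) = ∅ := by rw [Set.inter_comm]; exact hd
  intro ms tr Gf h
  rcases branch_run_iff.1 h with ⟨hdisj, hlen, bs₂, hf, rfl⟩ |
    ⟨U, l, W, msU, m, msW, bsu, X, rfl, rfl, hlenU, hU, hfU, hmem, htail⟩
  · -- no p,q-commit in tr
    rw [List.forall₂_map_left_iff] at hf
    obtain ⟨l₀, hl₀⟩ := List.exists_mem_of_ne_nil lsI hI
    obtain ⟨c₀, hc₀, h1₀, σ⟩ : ∃ c₀ ∈ bs₂, l₀ = c₀.1 ∧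
        GStepsL ms (.branch r s bsJ) tr c₀.2 := by
      rcases forall₂_mem_left hf hl₀ with ⟨c₀, hc₀, h1, h2⟩
      exact ⟨c₀, hc₀, h1, h2⟩
    rcases branch_run_iff.1 σ with ⟨hdisj2, _, bsJ₂, hfJ, hc2⟩ |
      ⟨u, l', v, msu, m', msv, bsu2, Y, rfl, rfl, hlenu, hu, hfu, hmemJ, τ⟩
    · refine ⟨_, branch_run_of_forall₂ hdisj2 hlen (forall₂_map_map
        (f := fun bj => (bj.1, Global.branch p q (lsI.map fun l => (l, bj.2))))
        (g := fun c => (c.1, Global.branch p q (lsI.map fun l => (l, c.2)))) hfJ ?_)⟩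
      rintro a b ⟨h1, h2⟩
      exact ⟨by simp [h1], const_branch_run hdisj h2 lsI⟩
    · -- r,s-commit inside tr
      have hA : GStepsL msu (.branch r s (bsJ.map fun bj =>
          (bj.1, Global.branch p q (lsI.map fun l => (l, bj.2))))) u
          (.branch r s (bsu2.map fun c =>
            (c.1, Global.branch p q (lsI.map fun l => (l, c.2))))) := by
        refine branch_run_of_forall₂ (fun y hy => hu y hy) hlenu (forall₂_map_map
          (f := fun bj => (bj.1, Global.branch p q (lsI.map fun l => (l, bj.2))))
          (g := fun c => (c.1, Global.branch p q (lsI.map fun l => (l, c.2)))) hfu ?_)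
        rintro a b ⟨h1, h2⟩
        refine ⟨by simp [h1], const_branch_run (fun y hy => hdisj y ?_) h2 lsI⟩
        rw [List.mem_append]
        exact .inl hy
      have hsel : GStepN m' (.branch r s (bsu2.map fun c =>
          (c.1, Global.branch p q (lsI.map fun l => (l, c.2)))))
          ⟨r, s, .lab l'⟩ (.branch p q (lsI.map fun l => (l, Y))) := by
        have := List.mem_map_of_mem
          (f := fun c => (c.1, Global.branch p q (lsI.map fun l => (l, c.2)))) hmemJ
        exact .selbra this
      have hB : GStepsL msv (.branch p q (lsI.map fun l => (l, Y))) v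
          (.branch p q (lsI.map fun l => (l, c₀.2))) := by
        refine const_branch_run (fun y hy => hdisj y ?_) τ lsI
        rw [List.mem_append]
        exact .inr (List.mem_cons_of_mem _ hy)
      exact ⟨_, hA.append (.cons hsel hB)⟩
  · -- p,q-commit at ⟨p,q,l⟩ after U
    rw [List.forall₂_map_left_iff] at hfU
    obtain ⟨a, ha, h1a, σ⟩ : ∃ a ∈ lsI, a = l ∧
        GStepsL msU (.branch r s bsJ) U X := by
      rcases forall₂_mem_right hfU hmem with ⟨a, ha, h1, h2⟩
      exact ⟨a, ha, by simpa using h1, h2⟩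
    have hlI : l ∈ lsI := h1a ▸ ha
    rcases branch_run_iff.1 σ with ⟨hdisj2, _, bsJ₂, hfJ, rfl⟩ |
      ⟨u, l', v, msu, m', msv, bsu2, Y, rfl, rfl, hlenu, hu, hfu, hmemJ, τ⟩
    · -- U has no r,s-commit : X = branch r s bsJ₂
      have hA : GStepsL msU (.branch r s (bsJ.map fun bj =>
          (bj.1, Global.branch p q (lsI.map fun l => (l, bj.2))))) U
          (.branch r s (bsJ₂.map fun c =>
            (c.1, Global.branch p q (lsI.map fun l => (l, c.2))))) := by
        refine branch_run_of_forall₂ hdisj2 hlenU (forall₂_map_map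
          (f := fun bj => (bj.1, Global.branch p q (lsI.map fun l => (l, bj.2))))
          (g := fun c => (c.1, Global.branch p q (lsI.map fun l => (l, c.2)))) hfJ ?_)
        rintro a b ⟨h1, h2⟩
        exact ⟨by simp [h1], const_branch_run hU h2 lsI⟩
      have hsel : GStepN m (.branch r s (bsJ₂.map fun c =>
          (c.1, Global.branch p q (lsI.map fun l => (l, c.2)))))
          ⟨p, q, .lab l⟩ (.branch r s bsJ₂) := by
        refine GStepN.sbperm' (forall₂_map_left' ?_) (by rw [pid_mk]; exact hd)
        intro c _
        refine ⟨rfl, .selbra ?_⟩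
        exact List.mem_map.2 ⟨l, hlI, rfl⟩
      exact ⟨Gf, hA.append (.cons hsel htail)⟩
    · -- U itself contains the r,s-commit
      have hA : GStepsL msu (.branch r s (bsJ.map fun bj =>
          (bj.1, Global.branch p q (lsI.map fun l => (l, bj.2))))) u
          (.branch r s (bsu2.map fun c =>
            (c.1, Global.branch p q (lsI.map fun l => (l, c.2))))) := by
        refine branch_run_of_forall₂ (fun y hy => hu y hy) hlenu (forall₂_map_map
          (f := fun bj => (bj.1, Global.branch p q (lsI.map fun l => (l, bj.2))))
          (g := fun c => (c.1, Global.branch p q (lsI.map fun l => (l, c.2)))) hfu ?_)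
        rintro a b ⟨h1, h2⟩
        refine ⟨by simp [h1], const_branch_run (fun y hy => hU y ?_) h2 lsI⟩
        rw [List.mem_append]
        exact .inl hy
      have hsel : GStepN m' (.branch r s (bsu2.map fun c =>
          (c.1, Global.branch p q (lsI.map fun l => (l, c.2)))))
          ⟨r, s, .lab l'⟩ (.branch p q (lsI.map fun l => (l, Y))) :=
        .selbra (List.mem_map_of_mem
          (f := fun c => (c.1, Global.branch p q (lsI.map fun l => (l, c.2)))) hmemJ)
      have hB : GStepsL msv (.branch p q (lsI.map fun l => (l, Y))) v
          (.branch p q (lsI.map fun l => (l, X))) := by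
        refine const_branch_run (fun y hy => hU y ?_) τ lsI
        rw [List.mem_append]
        exact .inr (List.mem_cons_of_mem _ hy)
      have hsel2 : GStepN m (.branch p q (lsI.map fun l => (l, X)))
          ⟨p, q, .lab l⟩ X :=
        .selbra (List.mem_map.2 ⟨l, hlI, rfl⟩)
      have h5 := hA.append (GStepsL.cons hsel (hB.append (.cons hsel2 htail)))
      refine ⟨Gf, ?_⟩
      simp only [List.append_assoc, List.cons_append] at h5 ⊢
      exact h5
theorem const_slots_extract {ms tr} {C : Global} {lsI : List Label}
    {zs : List (Label × Global)} (hI : lsI ≠ [])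
    (hf : List.Forall₂ (BRun ms tr) (lsI.map fun l => (l, C)) zs) :
    ∃ D, GStepsL ms C tr D := by
  obtain ⟨l₀, hl₀⟩ := List.exists_mem_of_ne_nil lsI hI
  rw [List.forall₂_map_left_iff] at hf
  rcases forall₂_mem_left hf hl₀ with ⟨z, _, _, h2⟩
  exact ⟨z.2, h2⟩

theorem pref_lab_inj {p q : ℕ} {l₁ l₂ : Label}
    (h : (⟨p, q, .lab l₁⟩ : Pref) = ⟨p, q, .lab l₂⟩) : l₁ = l₂ := by
  cases h
  rfl

theorem distrib_rev {p q r s : ℕ} {lsI : List Label} {bsJ : List (Label × Global)}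
    (hI : lsI ≠ []) (hJ : bsJ ≠ []) (hd : ({p, q} : Set ℕ) ∩ ({r, s} : Set ℕ) = ∅) :
    ∀ {ms tr Gf}, GStepsL ms (.branch r s (bsJ.map fun bj =>
      (bj.1, .branch p q (lsI.map fun l => (l, bj.2))))) tr Gf →
    ∃ Gf', GStepsL ms (.branch p q (lsI.map fun l => (l, .branch r s bsJ))) tr Gf' := by
  have hd' : ({r, s} : Set ℕ) ∩ ({p, q} : Set ℕ) = ∅ := by rw [Set.inter_comm]; exact hd
  intro ms tr Gf h
  rcases branch_run_iff.1 h with ⟨hdisj, hlen, bs₂, hf, rfl⟩ |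
    ⟨U, l', W, msU, m, msW, bsu, Z, rfl, rfl, hlenU, hU, hfU, hmem, τ⟩
  · rw [List.forall₂_map_left_iff] at hf
    by_cases htrd : ∀ x ∈ tr, x.pid ∩ ({p, q} : Set ℕ) = ∅
    · obtain ⟨bsD, hfD⟩ : ∃ bsD, List.Forall₂
          (fun (bj d : Label × Global) => bj.1 = d.1 ∧ GStepsL ms bj.2 tr d.2) bsJ bsD := by
        apply forall₂_exists hf
        rintro bj c ⟨h1, h2⟩
        rcases branch_run_iff.1 h2 with ⟨_, _, zs, hfS, _⟩ |
          ⟨u, l₂, w, _, _, _, _, _, htr, _, _, hu, _, _, _⟩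
        · rcases const_slots_extract hI hfS with ⟨D, hD⟩
          exact ⟨(bj.1, D), rfl, hD⟩
        · exact absurd (htrd (⟨p, q, .lab l₂⟩ : Pref) (by rw [htr]; simp)) pq_commit_bad
      refine ⟨_, branch_run_of_forall₂ htrd hlen (forall₂_map_same
        (f := fun l => (l, Global.branch r s bsJ))
        (g := fun l => (l, Global.branch r s bsD)) fun a _ => ?_)⟩
      exact ⟨rfl, branch_run_of_forall₂ hdisj hlen hfD⟩
    · push_neg at htrd
      obtain ⟨x, hx, hxbad⟩ := htrd
      obtain ⟨bj₀, hbj₀⟩ := List.exists_mem_of_ne_nil bsJ hJ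
      obtain ⟨c₀, hc₀, h1₀, σ₀⟩ := forall₂_mem_left hf hbj₀
      rcases branch_run_iff.1 σ₀ with ⟨hda, _, _, _, _⟩ |
        ⟨u, l, w, msu, m, msw, slots₀, Y₀, rfl, rfl, hlenu, hu, hfS₀, hmem₀, τ₀⟩
      · exact absurd (hda x hx) hxbad.ne_empty
      · have hlI : l ∈ lsI := by
          rw [List.forall₂_map_left_iff] at hfS₀
          rcases forall₂_mem_right hfS₀ hmem₀ with ⟨a, ha, h1, _⟩
          have : a = l := by simpa using h1
          exact this ▸ ha
        obtain ⟨bsE, hfE, hfT⟩ : ∃ bsE, List.Forall₂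
            (fun (bj e : Label × Global) => bj.1 = e.1 ∧ GStepsL msu bj.2 u e.2) bsJ bsE ∧
            List.Forall₂
            (fun (e c : Label × Global) => e.1 = c.1 ∧ GStepsL msw e.2 w c.2) bsE bs₂ := by
          apply forall₂_interp hf
          rintro bj c ⟨h1, h2⟩
          rcases branch_run_iff.1 h2 with ⟨hda, _, _, _, _⟩ |
            ⟨u₂, l₂, w₂, msu₂, m₂, msw₂, slots, Y, htr, hms, hlenu₂, hu₂, hfS, hmemS, τS⟩
          · exact absurd (hda x hx) hxbad.ne_empty
          · rcases split_unique (P := fun y => y.pid ∩ ({p, q} : Set ℕ) = ∅) htr.symm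
              (fun y hy => hu₂ y hy) (fun y hy => hu y hy) pq_commit_bad pq_commit_bad with
              ⟨rfl, hxeq, rfl⟩
            obtain rfl : l₂ = l := pref_lab_inj hxeq
            rcases ms_split_unique hms.symm (by rw [hlenu₂, hlenu]) with ⟨rfl, rfl, rfl⟩
            rw [List.forall₂_map_left_iff] at hfS
            rcases forall₂_mem_right hfS hmemS with ⟨a, _, h1S, h2S⟩
            refine ⟨(bj.1, Y), ⟨rfl, h2S⟩, ⟨by simpa using h1, τS⟩⟩
        have hA : GStepsL msu (.branch p q (lsI.map fun l => (l, .branch r s bsJ))) u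
            (.branch p q (lsI.map fun l => (l, .branch r s bsE))) := by
          refine branch_run_of_forall₂ hu hlenu (forall₂_map_same
            (f := fun l => (l, Global.branch r s bsJ))
            (g := fun l => (l, Global.branch r s bsE)) fun a _ => ?_)
          refine ⟨rfl, branch_run_of_forall₂ (fun y hy => hdisj y ?_) hlenu hfE⟩
          rw [List.mem_append]
          exact .inl hy
        have hsel : GStepN m (.branch p q (lsI.map fun l => (l, Global.branch r s bsE)))
            ⟨p, q, .lab l⟩ (.branch r s bsE) :=
          .selbra (List.mem_map.2 ⟨l, hlI, rfl⟩)
        have hB : GStepsL msw (.branch r s bsE) w (.branch r s bs₂) := by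
          refine branch_run_of_forall₂ (fun y hy => hdisj y ?_) τ₀.length_eq hfT
          rw [List.mem_append]
          exact .inr (List.mem_cons_of_mem _ hy)
        exact ⟨_, hA.append (.cons hsel hB)⟩
  · rw [List.forall₂_map_left_iff] at hfU
    obtain ⟨k, hk, hbk⟩ := List.mem_iff_getElem.1 hmem
    have hlenJu : bsJ.length = bsu.length := hfU.length_eq
    have hkJ : k < bsJ.length := by rw [hlenJu]; exact hk
    have hRk := (List.forall₂_iff_get.1 hfU).2 k hkJ hk
    rw [List.get_eq_getElem, List.get_eq_getElem, hbk] at hRk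
    obtain ⟨h1k, σ₀⟩ := hRk
    simp only at h1k σ₀
    by_cases hUd : ∀ x ∈ U, x.pid ∩ ({p, q} : Set ℕ) = ∅
    · rcases branch_run_iff.1 σ₀ with ⟨_, _, zs, hfZ, rfl⟩ |
        ⟨u, l₂, v, _, _, _, _, _, htr, _, _, hu, _, _, _⟩
      swap
      · exact absurd (hUd (⟨p, q, .lab l₂⟩ : Pref) (by rw [htr]; simp)) pq_commit_bad
      · rw [List.forall₂_map_left_iff] at hfZ
        obtain ⟨bsD, hfD⟩ : ∃ bsD, List.Forall₂
            (fun (bj d : Label × Global) => bj.1 = d.1 ∧ GStepsL msU bj.2 U d.2) bsJ bsD := by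
          apply forall₂_exists hfU
          rintro bj c ⟨h1, h2⟩
          rcases branch_run_iff.1 h2 with ⟨_, _, zs', hfS, _⟩ |
            ⟨u, l₂, w, _, _, _, _, _, htr, _, _, hu, _, _, _⟩
          · rcases const_slots_extract hI hfS with ⟨D, hD⟩
            exact ⟨(bj.1, D), rfl, hD⟩
          · exact absurd (hUd (⟨p, q, .lab l₂⟩ : Pref) (by rw [htr]; simp)) pq_commit_bad
        have hkD : k < bsD.length := by rw [← hfD.length_eq]; exact hkJ
        have hA : GStepsL msU (.branch p q (lsI.map fun l => (l, .branch r s bsJ))) U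
            (.branch p q (zs.map fun z =>
              (z.1, .branch r s (bsD.set k ((bsJ[k]'hkJ).1, z.2))))) := by
          refine branch_run_of_forall₂ hUd hlenU (forall₂_map_map
            (f := fun l => (l, Global.branch r s bsJ))
            (g := fun z => (z.1, Global.branch r s (bsD.set k ((bsJ[k]'hkJ).1, z.2)))) hfZ ?_)
          rintro a z ⟨h1, h2⟩
          refine ⟨by simpa using h1, ?_⟩
          refine branch_run_of_forall₂ hU hlenU (forall₂_set hfD hkJ ⟨rfl, ?_⟩)
          simpa using h2
        have hsel : GStepN m (.branch p q (zs.map fun z =>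
            (z.1, .branch r s (bsD.set k ((bsJ[k]'hkJ).1, z.2)))))
            ⟨r, s, .lab l'⟩ (.branch p q zs) := by
          refine GStepN.sbperm' (forall₂_map_left' ?_) hd'
          intro z _
          refine ⟨rfl, .selbra ?_⟩
          rw [← h1k]
          have hvalid : k < (bsD.set k ((bsJ[k]'hkJ).1, z.2)).length := by
            rw [List.length_set]; exact hkD
          have hset := List.getElem_set_self (l := bsD) (i := k)
            (a := ((bsJ[k]'hkJ).1, z.2)) hvalid
          have hmm := List.getElem_mem hvalid
          rw [hset] at hmm
          exact hmm
        exact ⟨Gf, hA.append (.cons hsel τ)⟩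
    · push_neg at hUd
      obtain ⟨x, hx, hxbad⟩ := hUd
      rcases branch_run_iff.1 σ₀ with ⟨hda, _, _, _, _⟩ |
        ⟨u, l, v, msu, m₂, msv, slots₀, Y₀, rfl, rfl, hlenu, hu, hfS₀, hmem₀, τ₀⟩
      · exact absurd (hda x hx) hxbad.ne_empty
      · have hlI : l ∈ lsI := by
          rw [List.forall₂_map_left_iff] at hfS₀
          rcases forall₂_mem_right hfS₀ hmem₀ with ⟨a, ha, h1, _⟩
          have : a = l := by simpa using h1
          exact this ▸ ha
        obtain ⟨bsE, hfE, hfT⟩ : ∃ bsE, List.Forall₂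
            (fun (bj e : Label × Global) => bj.1 = e.1 ∧ GStepsL msu bj.2 u e.2) bsJ bsE ∧
            List.Forall₂
            (fun (e c : Label × Global) => e.1 = c.1 ∧ GStepsL msv e.2 v c.2) bsE bsu := by
          apply forall₂_interp hfU
          rintro bj c ⟨h1, h2⟩
          rcases branch_run_iff.1 h2 with ⟨hda, _, _, _, _⟩ |
            ⟨u₂, l₂, w₂, msu₂, m₃, msw₂, slots, Y, htr, hms, hlenu₂, hu₂, hfS, hmemS, τS⟩
          · exact absurd (hda x hx) hxbad.ne_empty
          · rcases split_unique (P := fun y => y.pid ∩ ({p, q} : Set ℕ) = ∅) htr.symm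
              (fun y hy => hu₂ y hy) (fun y hy => hu y hy) pq_commit_bad pq_commit_bad with
              ⟨rfl, hxeq, rfl⟩
            obtain rfl : l₂ = l := pref_lab_inj hxeq
            rcases ms_split_unique hms.symm (by rw [hlenu₂, hlenu]) with ⟨rfl, rfl, rfl⟩
            rw [List.forall₂_map_left_iff] at hfS
            rcases forall₂_mem_right hfS hmemS with ⟨a, _, h1S, h2S⟩
            exact ⟨(bj.1, Y), ⟨rfl, h2S⟩, ⟨by simpa using h1, τS⟩⟩
        have hA : GStepsL msu (.branch p q (lsI.map fun l => (l, .branch r s bsJ))) u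
            (.branch p q (lsI.map fun l => (l, .branch r s bsE))) := by
          refine branch_run_of_forall₂ hu hlenu (forall₂_map_same
            (f := fun l => (l, Global.branch r s bsJ))
            (g := fun l => (l, Global.branch r s bsE)) fun a _ => ?_)
          refine ⟨rfl, branch_run_of_forall₂ (fun y hy => hU y ?_) hlenu hfE⟩
          rw [List.mem_append]
          exact .inl hy
        have hsel : GStepN m₂ (.branch p q (lsI.map fun l => (l, Global.branch r s bsE)))
            ⟨p, q, .lab l⟩ (.branch r s bsE) :=
          .selbra (List.mem_map.2 ⟨l, hlI, rfl⟩)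
        have hB : GStepsL msv (.branch r s bsE) v (.branch r s bsu) := by
          refine branch_run_of_forall₂ (fun y hy => hU y ?_) τ₀.length_eq hfT
          rw [List.mem_append]
          exact .inr (List.mem_cons_of_mem _ hy)
        have hsel2 : GStepN m (.branch r s bsu) ⟨r, s, .lab l'⟩ Z := .selbra hmem
        have h5 := hA.append (GStepsL.cons hsel (hB.append (.cons hsel2 τ)))
        refine ⟨Gf, ?_⟩
        simp only [List.append_assoc, List.cons_append] at h5 ⊢
        exact h5
/-! ### Main simulation lemma -/

theorem forall₂_transport {α β γ δ : Type _} {l₁ : List α} {l₂ : List β} {l₃ : List γ}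
    {S : α → β → Prop} {R : α → γ → Prop} {R' : β → δ → Prop}
    (hS : List.Forall₂ S l₁ l₂) (hR : List.Forall₂ R l₁ l₃)
    (f : ∀ a b cc, S a b → R a cc → ∃ d, R' b d) : ∃ l₄, List.Forall₂ R' l₂ l₄ := by
  induction hS generalizing l₃ with
  | nil => exact ⟨[], .nil⟩
  | cons hab _ ih =>
    cases hR with
    | cons hac hR =>
      rcases ih hR with ⟨l₄, hl₄⟩
      rcases f _ _ _ hab hac with ⟨d, hd⟩
      exact ⟨d :: l₄, .cons hd hl₄⟩

theorem sum_append_le {msu msv : List ℕ} {m : ℕ} :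
    (msu ++ msv).sum ≤ (msu ++ m :: msv).sum := by
  simp only [List.sum_append, List.sum_cons]
  omega

theorem sum_prefix_le {msu msv : List ℕ} {m : ℕ} : msu.sum ≤ (msu ++ m :: msv).sum := by
  simp only [List.sum_append, List.sum_cons]
  omega

def SimP (c : ℕ) : Prop := ∀ {G G' : Global}, Iso G G' →
    ((∀ ms tr Gf, ms.sum ≤ c → GStepsL ms G tr Gf → ∃ Gf', GStepsL ms G' tr Gf') ∧
     (∀ ms tr Gf, ms.sum ≤ c → GStepsL ms G' tr Gf → ∃ Gf', GStepsL ms G tr Gf'))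

theorem master : ∀ c : ℕ, SimP c := by
  intro c
  induction c using Nat.strong_induction_on with
  | _ c IHc =>
  intro G G' h
  induction h with
  | refl G => exact ⟨fun _ _ _ _ h => ⟨_, h⟩, fun _ _ _ _ h => ⟨_, h⟩⟩
  | symm _ ih => exact ⟨ih.2, ih.1⟩
  | trans _ _ ih₁ ih₂ =>
    constructor
    · intro ms tr Gf hc hrun
      rcases ih₁.1 ms tr Gf hc hrun with ⟨Gf', h'⟩
      exact ih₂.1 ms tr Gf' hc h'
    · intro ms tr Gf hc hrun
      rcases ih₂.2 ms tr Gf hc hrun with ⟨Gf', h'⟩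
      exact ih₁.2 ms tr Gf' hc h'
  | @comm_cong g A B _ ih =>
    have key : ∀ {A B : Global},
        (∀ ms tr Gf, ms.sum ≤ c → GStepsL ms A tr Gf → ∃ Gf', GStepsL ms B tr Gf') →
        ∀ ms tr Gf, ms.sum ≤ c → GStepsL ms (.comm g A) tr Gf →
          ∃ Gf', GStepsL ms (.comm g B) tr Gf' := by
      intro A B sim ms tr Gf hc hrun
      rcases comm_run_iff.1 hrun with ⟨hda, hlen, G₂, hrun₂, rfl⟩ |
        ⟨u, v, msu, m, msv, rfl, rfl, hlenu, hu, hrun₂⟩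
      · rcases sim ms tr G₂ hc hrun₂ with ⟨Gf', h'⟩
        exact ⟨_, comm_run_iff.2 (.inl ⟨hda, hlen, Gf', h', rfl⟩)⟩
      · rcases sim (msu ++ msv) (u ++ v) Gf (le_trans sum_append_le hc) hrun₂ with ⟨Gf', h'⟩
        exact ⟨Gf', comm_run_iff.2 (.inr ⟨u, v, msu, m, msv, rfl, rfl, hlenu, hu, h'⟩)⟩
    exact ⟨key ih.1, key ih.2⟩
  | @branch_cong p q bs bs' hlen hlab hiso ih =>
    have key : ∀ {bsA bsB : List (Label × Global)},
        List.Forall₂ (fun (a b : Label × Global) => a.1 = b.1 ∧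
          ∀ ms tr Gf, ms.sum ≤ c → GStepsL ms a.2 tr Gf → ∃ Gf', GStepsL ms b.2 tr Gf')
          bsA bsB →
        ∀ ms tr Gf, ms.sum ≤ c → GStepsL ms (.branch p q bsA) tr Gf →
          ∃ Gf', GStepsL ms (.branch p q bsB) tr Gf' := by
      intro bsA bsB hfs ms tr Gf hc hrun
      rcases branch_run_iff.1 hrun with ⟨hdisj, hlenl, bs₂, hf, rfl⟩ |
        ⟨u, l, v, msu, m, msv, bsu, X, rfl, rfl, hlenu, hu, hfu, hmem, htail⟩
      · obtain ⟨bs₂', hf'⟩ : ∃ bs₂', List.Forall₂ (BRun ms tr) bsB bs₂' := by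
          refine forall₂_transport hfs hf ?_
          rintro a b cc ⟨h1, hsim⟩ ⟨h2, h3⟩
          rcases hsim ms tr cc.2 hc h3 with ⟨Gf', h'⟩
          exact ⟨(b.1, Gf'), rfl, h'⟩
        exact ⟨_, branch_run_of_forall₂ hdisj hlenl hf'⟩
      · obtain ⟨k, hk, hbk⟩ := List.mem_iff_getElem.1 hmem
        have hlAu : bsA.length = bsu.length := hfu.length_eq
        have hlAB : bsA.length = bsB.length := hfs.length_eq
        have hkA : k < bsA.length := by rw [hlAu]; exact hk
        have hkB : k < bsB.length := by rw [← hlAB]; exact hkA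
        have hRk := (List.forall₂_iff_get.1 hfu).2 k hkA hk
        have hSk := (List.forall₂_iff_get.1 hfs).2 k hkA hkB
        rw [List.get_eq_getElem, List.get_eq_getElem] at hRk hSk
        rw [hbk] at hRk
        obtain ⟨hlabk, hruk⟩ := hRk
        obtain ⟨hlabS, hsimk⟩ := hSk
        have hfull : GStepsL (msu ++ msv) (bsA[k]'hkA).2 (u ++ v) Gf :=
          hruk.append htail
        rcases hsimk (msu ++ msv) (u ++ v) Gf (le_trans sum_append_le hc) hfull with
          ⟨Gf', hfull'⟩
        rcases hfull'.split hlenu with ⟨X', h1', h2'⟩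
        obtain ⟨bsu'', hfu''⟩ : ∃ bsu'', List.Forall₂ (BRun msu u) bsB bsu'' := by
          refine forall₂_transport hfs hfu ?_
          rintro a b cc ⟨h1, hsim⟩ ⟨h2, h3⟩
          rcases hsim msu u cc.2 (le_trans sum_prefix_le hc) h3 with ⟨Y', hY'⟩
          exact ⟨(b.1, Y'), rfl, hY'⟩
        have hlabB : (bsB[k]'hkB).1 = l := by
          rw [← hlabS, hlabk]
        have hset : List.Forall₂ (BRun msu u) bsB (bsu''.set k (l, X')) := by
          refine forall₂_set hfu'' hkB ?_
          exact ⟨by rw [List.get_eq_getElem, hlabB], h1'⟩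
        have hkset : k < (bsu''.set k (l, X')).length := by
          rw [List.length_set, ← hfu''.length_eq]
          exact hkB
        have hmem' : (l, X') ∈ bsu''.set k (l, X') := by
          have hset2 := List.getElem_set_self (l := bsu'') (i := k) (a := (l, X')) hkset
          have hmm := List.getElem_mem hkset
          rw [hset2] at hmm
          exact hmm
        exact ⟨Gf', branch_run_iff.2 (.inr ⟨u, l, v, msu, m, msv, _, X', rfl, rfl,
          hlenu, hu, hset, hmem', h2'⟩)⟩
    constructor
    · exact key (zip_to_forall₂ hlen fun bb hb => ⟨hlab bb hb, (ih bb hb).1⟩)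
    · refine key (List.Forall₂.flip ?_)
      exact zip_to_forall₂ hlen fun bb hb => ⟨(hlab bb hb).symm, (ih bb hb).2⟩
  | @mu_cong t A B hAB ih =>
    have key : ∀ {A B : Global}, Iso A B →
        ∀ ms tr Gf, ms.sum ≤ c → GStepsL ms (.mu t A) tr Gf →
          ∃ Gf', GStepsL ms (.mu t B) tr Gf' := by
      intro A B hAB ms tr Gf hc hrun
      cases tr with
      | nil =>
        rcases hrun.nil_inv with ⟨rfl, rfl⟩
        exact ⟨_, .refl _⟩
      | cons g tr' =>
        rcases hrun.cons_inv with ⟨m, ms', G₁, rfl, hst, hrest⟩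
        rcases hst.mu_inv with ⟨m', rfl, d⟩
        have hc1 : (m' :: ms').sum ≤ c - 1 := by
          simp only [List.sum_cons] at hc ⊢
          omega
        have hlt : c - 1 < c := by
          have : 1 ≤ ((m' + 1) :: ms').sum := by simp only [List.sum_cons]; omega
          omega
        rcases (IHc (c - 1) hlt (iso_mu_unfold hAB)).1 (m' :: ms') (g :: tr') Gf hc1
          (.cons d hrest) with ⟨Gf', h'⟩
        rcases h'.cons_inv with ⟨m₂, ms₂, G₂, heq, d', hrest'⟩
        injection heq with he1 he2
        subst he1
        subst he2
        exact ⟨Gf', .cons (.recur d') hrest'⟩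
    exact ⟨key hAB, key hAB.symm⟩
  | @swap g₁ g₂ G hd =>
    have hd2 : g₂.pid ∩ g₁.pid = ∅ := by rw [Set.inter_comm]; exact hd
    exact ⟨fun ms tr Gf _ h => swap_run hd h, fun ms tr Gf _ h => swap_run hd2 h⟩
  | @branching p q g bs hne hd =>
    exact ⟨fun ms tr Gf _ h => branching_fwd hd hne h,
      fun ms tr Gf _ h => branching_rev hd h⟩
  | @distrib p q r s lsI bsJ hI hJ hd =>
    exact ⟨fun ms tr Gf _ h => distrib_fwd hI hd h,
      fun ms tr Gf _ h => distrib_rev hI hJ hd h⟩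



/-- **Lemma 1.** Isomorphic global types have equal trace sets:
if `G₁ ≅ G₂` then `Tr(G₁) = Tr(G₂)`. -/
theorem iso_preserves_traces (G₁ G₂ : Global) (h : Iso G₁ G₂) :
    GTraces G₁ = GTraces G₂ := by
  ext tr
  constructor
  · rintro ⟨Gf, hrun⟩
    rcases gsteps_iff_gstepsL.1 hrun with ⟨ms, hms⟩
    rcases (master ms.sum h).1 ms tr Gf le_rfl hms with ⟨Gf', h'⟩
    exact ⟨Gf', gsteps_iff_gstepsL.2 ⟨ms, h'⟩⟩
  · rintro ⟨Gf, hrun⟩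
    rcases gsteps_iff_gstepsL.1 hrun with ⟨ms, hms⟩
    rcases (master ms.sum h).2 ms tr Gf le_rfl hms with ⟨Gf', h'⟩
    exact ⟨Gf', gsteps_iff_gstepsL.2 ⟨ms, h'⟩⟩
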